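/- If a function f : X → Y satisfies f(int(cl(int A))) ⊆ cl(f(A)) for every subset A of X, then f is β-continuous, i.e., the preimage of every open set is β-open. -/
import Mathlib
theorem image_condition_implies_beta_continuous {X Y : Type*} [TopologicalSpace X]
    [TopologicalSpace Y] (f : X → Y)
    (hf : ∀ A : Set X, f '' (interior (closure (interior A))) ⊆ closure (f '' A)) :
    ∀ U : Set Y, IsOpen U → f ⁻¹' U ⊆ closure (interior (closure (f ⁻¹' U))) := by
  intro U hU x hx
  by_contra hxc
  have hx' : x ∈ interior (closure (interior (f ⁻¹' U)ᶜ)) := by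
    rw [interior_compl, closure_compl, interior_compl]
    exact hxc
  have h1 : f x ∈ closure (f '' (f ⁻¹' U)ᶜ) := hf _ ⟨x, hx', rfl⟩
  have h2 : closure (f '' (f ⁻¹' U)ᶜ) ⊆ Uᶜ := by
    have : f '' (f ⁻¹' U)ᶜ ⊆ Uᶜ := by
      rintro y ⟨z, hz, rfl⟩
      exact hz
    calc closure (f '' (f ⁻¹' U)ᶜ) ⊆ closure Uᶜ := closure_mono this
      _ = Uᶜ := (hU.isClosed_compl).closure_eq
  exact h2 h1 hx
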